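/- Fix θ̄ ∈ ℝ^d, a symmetric positive semidefinite matrix Σ_θ ∈ ℝ^{d×d}, M_0 ∈ ℝ^{pT×d}, a linear map M : ℝ^{mT} → ℝ^{pT×d}, vectors y_r ∈ ℝ^{pT}, u_r ∈ ℝ^{mT}, and symmetric positive semidefinite matrices Q ∈ ℝ^{pT×pT}, R ∈ ℝ^{mT×mT}. Then the Final Control Error FCE : ℝ^{mT} → ℝ defined by FCE(u_f) := ‖y_r − (M_0 + M(u_f))θ̄‖_Q² + ‖u_r − u_f‖_R² + Tr[Q (M_0 + M(u_f)) Σ_θ (M_0 + M(u_f))ᵀ] is a convex function of u_f. -/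

import Mathlib

open Matrix

private lemma quad_convex {n : ℕ} {Q : Matrix (Fin n) (Fin n) ℝ} (hQ : Q.PosSemidef) :
    ConvexOn ℝ Set.univ (fun x : Fin n → ℝ => x ⬝ᵥ (Q *ᵥ x)) := by
  have hQt : Qᵀ = Q := by
    have := hQ.1.eq
    simpa [Matrix.conjTranspose, Matrix.map, Matrix.transpose] using this
  have hsymm : ∀ x y : Fin n → ℝ, x ⬝ᵥ (Q *ᵥ y) = y ⬝ᵥ (Q *ᵥ x) := by
    intro x y
    rw [Matrix.dotProduct_mulVec, ← Matrix.mulVec_transpose, hQt, dotProduct_comm]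
  refine ⟨convex_univ, fun x _ y _ a b ha hb hab => ?_⟩
  have hpos : (0:ℝ) ≤ (x - y) ⬝ᵥ (Q *ᵥ (x - y)) := by simpa using hQ.dotProduct_mulVec_nonneg (x - y)
  have expand : ∀ u v : Fin n → ℝ, ∀ s t : ℝ,
      (s • u + t • v) ⬝ᵥ (Q *ᵥ (s • u + t • v))
        = s * s * (u ⬝ᵥ (Q *ᵥ u)) + 2 * (s * t) * (u ⬝ᵥ (Q *ᵥ v)) + t * t * (v ⬝ᵥ (Q *ᵥ v)) := by
    intro u v s t
    simp [Matrix.mulVec_add, Matrix.mulVec_smul, dotProduct_add, add_dotProduct,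
      dotProduct_smul, smul_dotProduct, smul_eq_mul, hsymm v u]
    ring
  have hsub : (x - y) ⬝ᵥ (Q *ᵥ (x - y))
      = x ⬝ᵥ (Q *ᵥ x) - 2 * (x ⬝ᵥ (Q *ᵥ y)) + y ⬝ᵥ (Q *ᵥ y) := by
    have := expand x y 1 (-1)
    simpa [sub_eq_add_neg] using this
  show (a • x + b • y) ⬝ᵥ (Q *ᵥ (a • x + b • y))
      ≤ a • (x ⬝ᵥ (Q *ᵥ x)) + b • (y ⬝ᵥ (Q *ᵥ y))
  rw [expand x y a b, smul_eq_mul, smul_eq_mul]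
  set X := x ⬝ᵥ (Q *ᵥ x) with hX
  set Y := x ⬝ᵥ (Q *ᵥ y) with hY
  set Z := y ⬝ᵥ (Q *ᵥ y) with hZ
  have h0 : 0 ≤ X - 2*Y + Z := by linarith [hpos, hsub]
  have h1 : 0 ≤ a*b*(X - 2*Y + Z) := mul_nonneg (mul_nonneg ha hb) h0
  have hb1 : b = 1 - a := by linarith
  subst hb1
  nlinarith [h1]

private lemma aff_quad {m n : ℕ} {Q : Matrix (Fin n) (Fin n) ℝ} (hQ : Q.PosSemidef)
    (A : (Fin m → ℝ) →ₗ[ℝ] (Fin n → ℝ)) (b : Fin n → ℝ) :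
    ConvexOn ℝ Set.univ (fun u : Fin m → ℝ => (b + A u) ⬝ᵥ (Q *ᵥ (b + A u))) := by
  refine ⟨convex_univ, fun x _ y _ a c ha hc hac => ?_⟩
  have key : b + A (a • x + c • y) = a • (b + A x) + c • (b + A y) := by
    rw [map_add, _root_.map_smul, _root_.map_smul]
    have hb : b = a • b + c • b := by rw [← add_smul, hac, one_smul]
    rw [smul_add, smul_add]
    nth_rewrite 1 [hb]
    abel
  show (b + A (a • x + c • y)) ⬝ᵥ (Q *ᵥ (b + A (a • x + c • y)))
      ≤ a • ((b + A x) ⬝ᵥ (Q *ᵥ (b + A x))) + c • ((b + A y) ⬝ᵥ (Q *ᵥ (b + A y)))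
  rw [key]
  exact (quad_convex hQ).2 (Set.mem_univ _) (Set.mem_univ _) ha hc hac

private lemma sum_convex {ι : Type*} (s : Finset ι) {m : ℕ}
    (f : ι → (Fin m → ℝ) → ℝ) (hf : ∀ i ∈ s, ConvexOn ℝ Set.univ (f i)) :
    ConvexOn ℝ Set.univ (fun u => ∑ i ∈ s, f i u) := by
  classical
  induction s using Finset.induction_on with
  | empty => simpa using convexOn_const (0:ℝ) convex_univ
  | insert _ _ hnotmem ih =>
    rename_i a t
    simp only [Finset.sum_insert hnotmem]
    exact (hf a (Finset.mem_insert_self a t)).add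
      (ih fun i hi => hf i (Finset.mem_insert_of_mem hi))

private lemma trace_col {n m : ℕ} (Q : Matrix (Fin n) (Fin n) ℝ) (D : Matrix (Fin n) (Fin m) ℝ) :
    (Q * D * Dᵀ).trace = ∑ j, (fun i => D i j) ⬝ᵥ (Q *ᵥ (fun i => D i j)) := by
  simp only [Matrix.trace, Matrix.diag, Matrix.mul_apply, Matrix.transpose_apply,
    dotProduct, Matrix.mulVec, Finset.sum_mul, Finset.mul_sum]
  rw [Finset.sum_comm]
  refine Finset.sum_congr rfl fun j _ => Finset.sum_congr rfl fun i _ => ?_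
  exact Finset.sum_congr rfl fun k _ => by ring

/-- the Final Control Error
`FCE(u_f) := ‖y_r − (M_0 + M u_f)θ̄‖_Q² + ‖u_r − u_f‖_R²
           + Tr[Q (M_0 + M u_f) Σ_θ (M_0 + M u_f)ᵀ]`
is a convex function of `u_f`, for `Q, R, Σ_θ` symmetric positive semidefinite and
`M` linear. -/
theorem stmt_13 (d pT mT : ℕ) (θbar : Fin d → ℝ)
    (Sθ : Matrix (Fin d) (Fin d) ℝ) (hSθ : Sθ.PosSemidef)
    (M0 : Matrix (Fin pT) (Fin d) ℝ)
    (M : (Fin mT → ℝ) →ₗ[ℝ] Matrix (Fin pT) (Fin d) ℝ)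
    (yr : Fin pT → ℝ) (ur : Fin mT → ℝ)
    (Q : Matrix (Fin pT) (Fin pT) ℝ) (R : Matrix (Fin mT) (Fin mT) ℝ)
    (hQ : Q.PosSemidef) (hR : R.PosSemidef) :
    ConvexOn ℝ Set.univ (fun uf : Fin mT → ℝ =>
      (yr - (M0 + M uf) *ᵥ θbar) ⬝ᵥ (Q *ᵥ (yr - (M0 + M uf) *ᵥ θbar))
        + (ur - uf) ⬝ᵥ (R *ᵥ (ur - uf))
        + Matrix.trace (Q * (M0 + M uf) * Sθ * (M0 + M uf)ᵀ)) := by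
  open scoped MatrixOrder in
  obtain ⟨B, hB⟩ : ∃ B : Matrix (Fin d) (Fin d) ℝ, Sθ = Bᴴ * B := CStarAlgebra.nonneg_iff_eq_star_mul_self.mp hSθ.nonneg
  let A1 : (Fin mT → ℝ) →ₗ[ℝ] (Fin pT → ℝ) :=
    { toFun := fun u => -(M u *ᵥ θbar)
      map_add' := by intro u v; simp [Matrix.add_mulVec]; abel
      map_smul' := by intro c u; simp [Matrix.smul_mulVec] }
  let A2 : (Fin mT → ℝ) →ₗ[ℝ] (Fin mT → ℝ) := -LinearMap.id
  let A3 : Fin d → ((Fin mT → ℝ) →ₗ[ℝ] (Fin pT → ℝ)) := fun j =>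
    { toFun := fun u => fun i => (M u * Bᵀ) i j
      map_add' := by intro u v; funext i; simp [Matrix.add_mul]
      map_smul' := by intro c u; funext i; simp [Matrix.smul_mul] }
  have h1 := aff_quad hQ A1 (yr - M0 *ᵥ θbar)
  have h2 := aff_quad hR A2 ur
  have h3 : ConvexOn ℝ Set.univ (fun u => ∑ j : Fin d,
      ((fun i => (M0 * Bᵀ) i j) + A3 j u) ⬝ᵥ (Q *ᵥ ((fun i => (M0 * Bᵀ) i j) + A3 j u))) :=
    sum_convex Finset.univ _ (fun j _ => aff_quad hQ (A3 j) (fun i => (M0 * Bᵀ) i j))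
  have H := (h1.add h2).add h3
  have hfe : (fun uf : Fin mT → ℝ =>
      (yr - (M0 + M uf) *ᵥ θbar) ⬝ᵥ (Q *ᵥ (yr - (M0 + M uf) *ᵥ θbar))
        + (ur - uf) ⬝ᵥ (R *ᵥ (ur - uf))
        + Matrix.trace (Q * (M0 + M uf) * Sθ * (M0 + M uf)ᵀ))
      = ((fun u => ((yr - M0 *ᵥ θbar) + A1 u) ⬝ᵥ (Q *ᵥ ((yr - M0 *ᵥ θbar) + A1 u)))
        + (fun u => (ur + A2 u) ⬝ᵥ (R *ᵥ (ur + A2 u)))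
        + fun u => ∑ j : Fin d,
          ((fun i => (M0 * Bᵀ) i j) + A3 j u) ⬝ᵥ (Q *ᵥ ((fun i => (M0 * Bᵀ) i j) + A3 j u))) := by
    funext u
    have e1 : yr - (M0 + M u) *ᵥ θbar = (yr - M0 *ᵥ θbar) + A1 u := by
      show yr - (M0 + M u) *ᵥ θbar = (yr - M0 *ᵥ θbar) + -(M u *ᵥ θbar)
      rw [Matrix.add_mulVec]; abel
    have e2 : ur - u = ur + A2 u := by
      show ur - u = ur + -u
      abel
    have e3 : Matrix.trace (Q * (M0 + M u) * Sθ * (M0 + M u)ᵀ)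
        = ∑ j : Fin d, ((fun i => (M0 * Bᵀ) i j) + A3 j u) ⬝ᵥ
            (Q *ᵥ ((fun i => (M0 * Bᵀ) i j) + A3 j u)) := by
      have hD : Q * (M0 + M u) * Sθ * (M0 + M u)ᵀ
          = Q * ((M0 + M u) * Bᵀ) * ((M0 + M u) * Bᵀ)ᵀ := by
        rw [hB, Matrix.transpose_mul, Matrix.transpose_transpose]
        simp only [Matrix.mul_assoc, Matrix.conjTranspose_eq_transpose_of_trivial]
      rw [hD, trace_col]
      refine Finset.sum_congr rfl fun j _ => ?_
      have hcol : (fun i => ((M0 + M u) * Bᵀ) i j)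
          = (fun i => (M0 * Bᵀ) i j) + A3 j u := by
        funext i
        show ((M0 + M u) * Bᵀ) i j = (M0 * Bᵀ) i j + (M u * Bᵀ) i j
        rw [Matrix.add_mul]; rfl
      rw [hcol]
    simp only [Pi.add_apply, e1, e2, e3]
  rw [hfe]
  exact H
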